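/- For fixed P > 0, the function A(n) = P²·cot(π/n)/(4n) is strictly concave on (2, ∞), i.e., its second derivative with respect to n is negative for all n > 2. -/

import Mathlib

open Real

private lemma hx_facts {x : ℝ} (hx : 2 < x) :
    0 < x ∧ 0 < π / x ∧ π / x < π / 2 ∧ 0 < Real.sin (π / x) ∧ 0 < Real.cos (π / x) := by
  have hx0 : (0:ℝ) < x := by linarith
  have hu0 : 0 < π / x := by positivity
  have hupi2 : π / x < π / 2 := by
    rw [div_lt_div_iff₀ hx0 (by norm_num : (0:ℝ) < 2)]
    nlinarith [pi_pos]
  have hs : 0 < Real.sin (π / x) :=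
    Real.sin_pos_of_pos_of_lt_pi hu0 (by linarith [pi_pos])
  have hc : 0 < Real.cos (π / x) :=
    Real.cos_pos_of_mem_Ioo ⟨by linarith [pi_pos], hupi2⟩
  exact ⟨hx0, hu0, hupi2, hs, hc⟩

private lemma deriv1 (P x : ℝ) (hx : 2 < x) :
    HasDerivAt (fun n : ℝ => P ^ 2 * (Real.cos (π / n) / Real.sin (π / n)) / (4 * n))
      (P^2/4 * ((π - x * Real.sin (π/x) * Real.cos (π/x)) / (x^3 * Real.sin (π/x)^2))) x := by
  obtain ⟨hx0, hu0, hupi2, hs, hc⟩ := hx_facts hx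
  have hx0' : x ≠ 0 := ne_of_gt hx0
  have hsne : Real.sin (π / x) ≠ 0 := ne_of_gt hs
  have hπ : HasDerivAt (fun n : ℝ => π / n) ((0 * x - π * 1) / x ^ 2) x :=
    (hasDerivAt_const x π).div (hasDerivAt_id x) hx0'
  have hcos := (Real.hasDerivAt_cos (π/x)).comp x hπ
  have hsin := (Real.hasDerivAt_sin (π/x)).comp x hπ
  have hq := hcos.div hsin hsne
  have hnum := hq.const_mul (P^2)
  have hden : HasDerivAt (fun n : ℝ => 4 * n) (4 * 1) x := (hasDerivAt_id x).const_mul 4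
  have hdne : 4 * x ≠ 0 := by positivity
  have hf := hnum.div hden hdne
  refine hf.congr_deriv (Eq.symm ?_)
  simp only [Function.comp_apply, Pi.div_apply, Pi.sub_apply, Pi.pow_apply, id]
  field_simp
  linear_combination (-(P^2*π)) * Real.sin_sq_add_cos_sq (π/x)

private lemma deriv2 (P x : ℝ) (hx : 2 < x) :
    HasDerivAt (fun n : ℝ =>
        P^2/4 * ((π - n * Real.sin (π/n) * Real.cos (π/n)) / (n^3 * Real.sin (π/n)^2)))
      (P^2/4 * (2*(π^2*Real.cos (π/x) + x^2*Real.cos (π/x)*Real.sin (π/x)^2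
        - 2*π*x*Real.sin (π/x)) / (x^5 * Real.sin (π/x)^3))) x := by
  obtain ⟨hx0, hu0, hupi2, hs, hc⟩ := hx_facts hx
  have hx0' : x ≠ 0 := ne_of_gt hx0
  have hsne : Real.sin (π / x) ≠ 0 := ne_of_gt hs
  have hπ : HasDerivAt (fun n : ℝ => π / n) ((0 * x - π * 1) / x ^ 2) x :=
    (hasDerivAt_const x π).div (hasDerivAt_id x) hx0'
  have hcos := (Real.hasDerivAt_cos (π/x)).comp x hπ
  have hsin := (Real.hasDerivAt_sin (π/x)).comp x hπ
  have hN := (hasDerivAt_const x π).sub (((hasDerivAt_id x).mul hsin).mul hcos)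
  have hD := (hasDerivAt_pow 3 x).mul (hsin.pow 2)
  have hDne : x^3 * Real.sin (π/x)^2 ≠ 0 := by positivity
  have hfrac := hN.div hD hDne
  have hfull := hfrac.const_mul (P^2/4)
  refine hfull.congr_deriv (Eq.symm ?_)
  simp only [Function.comp_apply, Pi.div_apply, Pi.mul_apply, Pi.sub_apply, Pi.pow_apply, id]
  field_simp
  linear_combination (P^2*π*x^2*Real.sin (π/x)^2) * Real.sin_sq_add_cos_sq (π/x)

private lemma key_ineq {u : ℝ} (h0 : 0 < u) (h2 : u < π / 2) :
    Real.cos u * (u^2 + Real.sin u^2) < 2 * u * Real.sin u := by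
  have hc : 0 < Real.cos u := Real.cos_pos_of_mem_Ioo ⟨by linarith [pi_pos], h2⟩
  have hslt : Real.sin u < u := Real.sin_lt h0
  have hs : 0 < Real.sin u := Real.sin_pos_of_pos_of_lt_pi h0 (by linarith [pi_pos])
  have ht : u < Real.tan u := Real.lt_tan h0 h2
  rw [Real.tan_eq_sin_div_cos, lt_div_iff₀ hc] at ht
  nlinarith [mul_pos hs hc, mul_pos h0 hc]

theorem area_strictConcave (P : ℝ) (hP : 0 < P) :
    StrictConcaveOn ℝ (Set.Ioi (2 : ℝ))
      (fun n : ℝ => P ^ 2 * (Real.cos (π / n) / Real.sin (π / n)) / (4 * n)) := by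
  apply strictConcaveOn_of_deriv2_neg (convex_Ioi 2)
  · intro y hy
    exact ((deriv1 P y hy).continuousAt).continuousWithinAt
  · intro x hx
    rw [interior_Ioi] at hx
    obtain ⟨hx0, hu0, hupi2, hs, hc⟩ := hx_facts hx
    have hev : deriv (fun n : ℝ => P ^ 2 * (Real.cos (π / n) / Real.sin (π / n)) / (4 * n))
        =ᶠ[nhds x] (fun n : ℝ =>
          P^2/4 * ((π - n * Real.sin (π/n) * Real.cos (π/n)) / (n^3 * Real.sin (π/n)^2))) := by
      filter_upwards [Ioi_mem_nhds hx] with y hy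
      exact (deriv1 P y hy).deriv
    have h2 : deriv^[2] (fun n : ℝ => P ^ 2 * (Real.cos (π / n) / Real.sin (π / n)) / (4 * n)) x
        = P^2/4 * (2*(π^2*Real.cos (π/x) + x^2*Real.cos (π/x)*Real.sin (π/x)^2
          - 2*π*x*Real.sin (π/x)) / (x^5 * Real.sin (π/x)^3)) := by
      have : deriv^[2] (fun n : ℝ => P ^ 2 * (Real.cos (π / n) / Real.sin (π / n)) / (4 * n)) x
          = deriv (deriv (fun n : ℝ => P ^ 2 * (Real.cos (π / n) / Real.sin (π / n)) / (4 * n))) x := by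
        simp [Function.iterate_succ, Function.comp]
      rw [this, hev.deriv_eq, (deriv2 P x hx).deriv]
    rw [h2]
    have hnumneg : π^2*Real.cos (π/x) + x^2*Real.cos (π/x)*Real.sin (π/x)^2
        - 2*π*x*Real.sin (π/x) < 0 := by
      have hk := key_ineq hu0 hupi2
      have heq : π^2*Real.cos (π/x) + x^2*Real.cos (π/x)*Real.sin (π/x)^2
          - 2*π*x*Real.sin (π/x)
          = x^2 * (Real.cos (π/x) * ((π/x)^2 + Real.sin (π/x)^2) - 2*(π/x)*Real.sin (π/x)) := by
        field_simp
      rw [heq]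
      exact mul_neg_of_pos_of_neg (by positivity) (by linarith)
    apply mul_neg_of_pos_of_neg (by positivity)
    apply div_neg_of_neg_of_pos (by linarith)
    exact mul_pos (pow_pos hx0 5) (pow_pos hs 3)
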